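/- On X = R^d_{++} with d ≥ 2, the strict coordinatewise dominance relation ≫ (x ≫ y iff x_i > y_i for all i) is open and irreflexive, and for every x ∈ R^d_{++} and every ε > 0 there exist y, z ∈ R^d_{++} within distance ε of x with y ≫ x and x ≫ z. Consequently, every complete continuous Grodal-transitive preference on R^d_{++} strictly monotone with respect to ≫ is locally strict, and the set of all such preferences is closed in the closed convergence topology. -/

import Mathlib

open Filter Topology MeasureTheory

/-- A binary relation on `X`, viewed as a set of pairs, is complete. -/
def CompleteRel {X : Type*} (R : Set (X × X)) : Prop :=
  ∀ x y : X, (x, y) ∈ R ∨ (y, x) ∈ R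

/-- The strict part of a relation. -/
def StrictPref {X : Type*} (R : Set (X × X)) (x y : X) : Prop :=
  (x, y) ∈ R ∧ (y, x) ∉ R

/-- A relation is locally strict. -/
def LocallyStrict {X : Type*} [TopologicalSpace X] (R : Set (X × X)) : Prop :=
  ∀ x y : X, (x, y) ∈ R → ∀ V ∈ 𝓝 ((x, y) : X × X), ∃ p ∈ V, StrictPref R p.1 p.2

/-- Convergence of a sequence of relations in the closed convergence topology. -/
def ClosedConv {X : Type*} [TopologicalSpace X] (R : ℕ → Set (X × X)) (S : Set (X × X)) : Prop :=
  (∀ p ∈ S, ∃ u : ℕ → X × X, Tendsto u atTop (𝓝 p) ∧ ∀ n, u n ∈ R n) ∧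
  (∀ φ : ℕ → ℕ, StrictMono φ → ∀ u : ℕ → X × X, (∀ k, u k ∈ R (φ k)) →
    ∀ p : X × X, Tendsto u atTop (𝓝 p) → p ∈ S)

/-- Grodal transitivity: `x ⪰ y ≻ z ⪰ w` implies `x ⪰ w`. -/
def GrodalTrans {X : Type*} (R : Set (X × X)) : Prop :=
  ∀ x y z w : X, (x, y) ∈ R → StrictPref R y z → (z, w) ∈ R → (x, w) ∈ R

/-- Strict monotonicity with respect to a dominance relation `D`. -/
def StrictMonoWrt {X : Type*} (R : Set (X × X)) (D : Set (X × X)) : Prop :=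
  ∀ x y : X, (x, y) ∈ D → StrictPref R x y


namespace Stmt10Aux

abbrev E (d : ℕ) := EuclideanSpace ℝ (Fin d)
abbrev Xd (d : ℕ) := {x : EuclideanSpace ℝ (Fin d) // ∀ i, 0 < x i}

variable {d : ℕ}

lemma tendsto_coord {u : ℕ → Xd d} {a : Xd d} (h : Tendsto u atTop (𝓝 a)) (i : Fin d) :
    Tendsto (fun n => (u n : E d) i) atTop (𝓝 ((a : E d) i)) :=
  (((EuclideanSpace.proj i).continuous.comp continuous_subtype_val).tendsto a).comp h

lemma eventually_lt_coords {u v : ℕ → Xd d} {a b : Xd d}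
    (hu : Tendsto u atTop (𝓝 a)) (hv : Tendsto v atTop (𝓝 b))
    (h : ∀ i, (b : E d) i < (a : E d) i) :
    ∀ᶠ n in atTop, ∀ i, (v n : E d) i < (u n : E d) i := by
  rw [eventually_all]
  exact fun i => (tendsto_coord hv i).eventually_lt (tendsto_coord hu i) (h i)

lemma exists_perturb (hd : 2 ≤ d) (x : Xd d) {ε : ℝ} (hε : 0 < ε) :
    ∃ y z : Xd d, dist y x < ε ∧ dist z x < ε ∧
      (∀ i, (x : E d) i < (y : E d) i) ∧ (∀ i, (z : E d) i < (x : E d) i) := by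
  have hne : Nonempty (Fin d) := ⟨⟨0, by omega⟩⟩
  set c : E d := WithLp.toLp 2 (fun _ => (1 : ℝ)) with hc
  set m : ℝ := Finset.univ.inf' (Finset.univ_nonempty) (fun i => (x : E d) i) with hm
  have hmpos : 0 < m := by
    rw [hm, Finset.lt_inf'_iff]
    exact fun i _ => x.2 i
  have hmle : ∀ i, m ≤ (x : E d) i := fun i => Finset.inf'_le _ (Finset.mem_univ i)
  set δ : ℝ := min (ε / (2 * (‖c‖ + 1))) (m / 2) with hδdef
  have hcpos : 0 < ‖c‖ + 1 := by positivity
  have hδpos : 0 < δ := lt_min (by positivity) (by linarith)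
  have hδm : δ ≤ m / 2 := min_le_right _ _
  have hδε : δ * ‖c‖ < ε := by
    have h1 : δ ≤ ε / (2 * (‖c‖ + 1)) := min_le_left _ _
    have h2 : δ * ‖c‖ ≤ δ * (‖c‖ + 1) := by nlinarith [norm_nonneg c, hδpos.le]
    have h3 : δ * (‖c‖ + 1) ≤ ε / (2 * (‖c‖ + 1)) * (‖c‖ + 1) := by nlinarith
    have h4 : ε / (2 * (‖c‖ + 1)) * (‖c‖ + 1) = ε / 2 := by field_simp
    linarith
  have hadd : ∀ i, ((x : E d) + δ • c) i = (x : E d) i + δ := by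
    intro i
    rw [PiLp.add_apply, PiLp.smul_apply, hc, PiLp.toLp_apply, smul_eq_mul, mul_one]
  have hsub : ∀ i, ((x : E d) - δ • c) i = (x : E d) i - δ := by
    intro i
    rw [PiLp.sub_apply, PiLp.smul_apply, hc, PiLp.toLp_apply, smul_eq_mul, mul_one]
  refine ⟨⟨(x : E d) + δ • c, fun i => ?_⟩, ⟨(x : E d) - δ • c, fun i => ?_⟩, ?_, ?_,
      fun i => ?_, fun i => ?_⟩
  · rw [hadd]; have := x.2 i; linarith
  · rw [hsub]; have := hmle i; linarith
  · rw [Subtype.dist_eq, dist_eq_norm]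
    simp only [add_sub_cancel_left]
    rw [norm_smul, Real.norm_eq_abs, abs_of_pos hδpos]
    exact hδε
  · rw [Subtype.dist_eq, dist_eq_norm]
    simp only [sub_sub_cancel_left, norm_neg]
    rw [norm_smul, Real.norm_eq_abs, abs_of_pos hδpos]
    exact hδε
  · show (x : E d) i < ((x : E d) + δ • c) i
    rw [hadd]; linarith
  · show ((x : E d) - δ • c) i < (x : E d) i
    rw [hsub]; linarith

end Stmt10Aux

theorem stmt10 (d : ℕ) (hd : 2 ≤ d) :
    let X := {x : EuclideanSpace ℝ (Fin d) // ∀ i, 0 < x i}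
    let Dom : Set (X × X) := {p | ∀ i, (p.2 : EuclideanSpace ℝ (Fin d)) i < (p.1 : EuclideanSpace ℝ (Fin d)) i}
    IsOpen Dom ∧
    (∀ x : X, (x, x) ∉ Dom) ∧
    (∀ x : X, ∀ ε : ℝ, 0 < ε → ∃ y z : X,
      dist y x < ε ∧ dist z x < ε ∧ (y, x) ∈ Dom ∧ (x, z) ∈ Dom) ∧
    (∀ R : Set (X × X), CompleteRel R → IsClosed R → GrodalTrans R →
      StrictMonoWrt R Dom → LocallyStrict R) ∧
    (∀ R : ℕ → Set (X × X),
      (∀ n, CompleteRel (R n) ∧ IsClosed (R n) ∧ GrodalTrans (R n) ∧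
        StrictMonoWrt (R n) Dom) →
      ∀ S : Set (X × X), IsClosed S → ClosedConv R S →
        CompleteRel S ∧ GrodalTrans S ∧ StrictMonoWrt S Dom) := by
  intro X Dom
  have hd1 : 0 < d := by omega
  refine ⟨?_, ?_, ?_, ?_, ?_⟩
  · -- IsOpen Dom
    have hDomEq : Dom = ⋂ i : Fin d,
        {p : X × X | (p.2 : EuclideanSpace ℝ (Fin d)) i < (p.1 : EuclideanSpace ℝ (Fin d)) i} := by
      ext p
      simp only [Set.mem_iInter, Set.mem_setOf_eq]
      rfl
    rw [hDomEq]
    refine isOpen_iInter_of_finite fun i => ?_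
    exact isOpen_lt
      (((EuclideanSpace.proj i).continuous.comp continuous_subtype_val).comp continuous_snd)
      (((EuclideanSpace.proj i).continuous.comp continuous_subtype_val).comp continuous_fst)
  · -- irreflexive
    exact fun x h => lt_irrefl _ (h ⟨0, hd1⟩)
  · -- perturbations
    intro x ε hε
    obtain ⟨y, z, hy, hz, h1, h2⟩ := Stmt10Aux.exists_perturb hd x hε
    exact ⟨y, z, hy, hz, h1, h2⟩
  · -- locally strict
    intro R hC hCl hG hM x y hxy V hV
    rw [nhds_prod_eq] at hV
    obtain ⟨U, hU, W, hW, hUW⟩ := Filter.mem_prod_iff.1 hV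
    obtain ⟨ε₁, hε₁, hball₁⟩ := Metric.mem_nhds_iff.1 hU
    obtain ⟨ε₂, hε₂, hball₂⟩ := Metric.mem_nhds_iff.1 hW
    obtain ⟨x', -, hx'd, -, hx'dom, -⟩ := Stmt10Aux.exists_perturb hd x hε₁
    obtain ⟨-, z', -, hz'd, -, hz'dom⟩ := Stmt10Aux.exists_perturb hd y hε₂
    have hrefl : ∀ a : X, (a, a) ∈ R := fun a => (hC a a).elim id id
    have hx'x : (x', x) ∈ Dom := hx'dom
    have hyz' : (y, z') ∈ Dom := hz'dom
    have h1 : (x', y) ∈ R := hG x' x' x y (hrefl x') (hM _ _ hx'x) hxy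
    have h2 : (x', z') ∈ R := hG x' y z' z' h1 (hM _ _ hyz') (hrefl z')
    have h3 : (z', x') ∉ R := fun h => (hM _ _ hyz').2 (hG z' x' x y h (hM _ _ hx'x) hxy)
    refine ⟨(x', z'), hUW (Set.mk_mem_prod (hball₁ ?_) (hball₂ ?_)), h2, h3⟩
    · exact Metric.mem_ball.2 hx'd
    · exact Metric.mem_ball.2 hz'd
  · -- closedness in closed convergence topology
    intro R hR S hScl hCC
    obtain ⟨hc1, hc2⟩ := hCC
    have hsub : ∀ (u : ℕ → X × X) (p : X × X), Tendsto u atTop (𝓝 p) →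
        (∃ᶠ n in atTop, u n ∈ R n) → p ∈ S := by
      intro u p hu hf
      obtain ⟨φ, hφ, hmem⟩ := extraction_of_frequently_atTop hf
      exact hc2 φ hφ (u ∘ φ) hmem p (hu.comp hφ.tendsto_atTop)
    refine ⟨?_, ?_, ?_⟩
    · -- CompleteRel S
      intro x y
      rcases frequently_or_distrib.1
        (Frequently.of_forall (f := (atTop : Filter ℕ)) fun n => (hR n).1 x y) with h | h
      · exact Or.inl (hsub (fun _ => (x, y)) (x, y) tendsto_const_nhds h)
      · exact Or.inr (hsub (fun _ => (y, x)) (y, x) tendsto_const_nhds h)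
    · -- GrodalTrans S
      intro x y z w hxy hyz hzw
      obtain ⟨u, hu, huR⟩ := hc1 _ hxy
      obtain ⟨t, ht, htR⟩ := hc1 _ hzw
      have hu1 : Tendsto (fun n => (u n).1) atTop (𝓝 x) := (continuous_fst.tendsto _).comp hu
      have hu2 : Tendsto (fun n => (u n).2) atTop (𝓝 y) := (continuous_snd.tendsto _).comp hu
      have ht1 : Tendsto (fun n => (t n).1) atTop (𝓝 z) := (continuous_fst.tendsto _).comp ht
      have ht2 : Tendsto (fun n => (t n).2) atTop (𝓝 w) := (continuous_snd.tendsto _).comp ht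
      have hfreq : ∃ᶠ n in atTop, StrictPref (R n) (u n).2 (t n).1 := by
        by_contra h
        rw [not_frequently] at h
        have h2 : ∀ᶠ n in atTop, ((t n).1, (u n).2) ∈ R n := by
          filter_upwards [h] with n hn
          rcases (hR n).1 (u n).2 (t n).1 with hbc | hcb
          · by_contra hcb'
            exact hn ⟨hbc, hcb'⟩
          · exact hcb
        exact hyz.2 (hsub (fun n => ((t n).1, (u n).2)) (z, y)
          (ht1.prodMk_nhds hu2) h2.frequently)
      obtain ⟨φ, hφ, hst⟩ := extraction_of_frequently_atTop hfreq
      have hmem : ∀ k, ((u (φ k)).1, (t (φ k)).2) ∈ R (φ k) := fun k =>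
        (hR (φ k)).2.2.1 _ _ _ _ (by simpa using huR (φ k)) (hst k) (by simpa using htR (φ k))
      exact hc2 φ hφ _ hmem (x, w)
        ((hu1.comp hφ.tendsto_atTop).prodMk_nhds (ht2.comp hφ.tendsto_atTop))
    · -- StrictMonoWrt S Dom
      intro x y hDom
      constructor
      · exact hc2 id strictMono_id (fun _ => (x, y))
          (fun n => ((hR n).2.2.2 x y hDom).1) _ tendsto_const_nhds
      · intro hS
        obtain ⟨u, hu, huR⟩ := hc1 _ hS
        have hu1 : Tendsto (fun n => (u n).1) atTop (𝓝 y) := (continuous_fst.tendsto _).comp hu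
        have hu2 : Tendsto (fun n => (u n).2) atTop (𝓝 x) := (continuous_snd.tendsto _).comp hu
        have hmid : ∀ i, ((2⁻¹ : ℝ) • ((x : EuclideanSpace ℝ (Fin d)) + (y : EuclideanSpace ℝ (Fin d)))) i
            = 2⁻¹ * ((x : EuclideanSpace ℝ (Fin d)) i + (y : EuclideanSpace ℝ (Fin d)) i) := by
          intro i
          rw [PiLp.smul_apply, PiLp.add_apply, smul_eq_mul]
        set m : X := ⟨(2⁻¹ : ℝ) • ((x : EuclideanSpace ℝ (Fin d)) + (y : EuclideanSpace ℝ (Fin d))),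
          fun i => by rw [hmid]; have := x.2 i; have := y.2 i; positivity⟩ with hmdef
        have hm1 : ∀ i, (y : EuclideanSpace ℝ (Fin d)) i < (m : EuclideanSpace ℝ (Fin d)) i := by
          intro i
          show _ < ((2⁻¹ : ℝ) • ((x : EuclideanSpace ℝ (Fin d)) + (y : EuclideanSpace ℝ (Fin d)))) i
          rw [hmid]
          have := hDom i
          linarith
        have hm2 : ∀ i, (m : EuclideanSpace ℝ (Fin d)) i < (x : EuclideanSpace ℝ (Fin d)) i := by
          intro i
          show ((2⁻¹ : ℝ) • ((x : EuclideanSpace ℝ (Fin d)) + (y : EuclideanSpace ℝ (Fin d)))) i < _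
          rw [hmid]
          have := hDom i
          linarith
        have ev1 : ∀ᶠ n in atTop, ∀ i, ((u n).1 : EuclideanSpace ℝ (Fin d)) i
            < (m : EuclideanSpace ℝ (Fin d)) i :=
          Stmt10Aux.eventually_lt_coords tendsto_const_nhds hu1 hm1
        have ev2 : ∀ᶠ n in atTop, ∀ i, (m : EuclideanSpace ℝ (Fin d)) i
            < ((u n).2 : EuclideanSpace ℝ (Fin d)) i :=
          Stmt10Aux.eventually_lt_coords hu2 tendsto_const_nhds hm2
        obtain ⟨n, h1, h2⟩ := (ev1.and ev2).exists
        have hpm : StrictPref (R n) m (u n).1 := (hR n).2.2.2 _ _ h1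
        have hqm : StrictPref (R n) (u n).2 m := (hR n).2.2.2 _ _ h2
        have hmm : (m, m) ∈ R n := ((hR n).1 m m).elim id id
        exact hpm.2 ((hR n).2.2.1 (u n).1 (u n).2 m m (by simpa using huR n) hqm hmm)
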